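/- Let A be an Artinian local commutative K-algebra. Then every element of T(A) lies in the subgroup of SL₃(L ⊗_K A) generated by U⁺(A) and U⁻(A). (This is the Kneser–Tits-type generation statement for SU₃ over Artinian local coefficient rings; applied with A = R⦅t⦆ for R an Artinian local algebra over an algebraically closed field k and K = k⦅t⦆, it yields Proposition 'Artinian Kneser-Tits for SU₃' of the paper.) -/

import Mathlib

open Matrix
open scoped TensorProduct

noncomputable section

variable (K L : Type*) [Field K] [Field L] [Algebra K L] (σ : L ≃ₐ[K] L)
variable (A : Type*) [CommRing A] [Algebra K A]

/-- The ring involution `τ = σ ⊗ id` on `B = L ⊗[K] A`. -/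
def tau : L ⊗[K] A →ₐ[K] L ⊗[K] A :=
  Algebra.TensorProduct.map σ.toAlgHom (AlgHom.id K A)

/-- The `A`-points of the unipotent radical of the upper Borel of `SU₃`. -/
def Uplus : Set (Matrix.SpecialLinearGroup (Fin 3) (L ⊗[K] A)) :=
  {M | ∃ u w : L ⊗[K] A, w + tau K L σ A w = u * tau K L σ A u ∧
    (M : Matrix (Fin 3) (Fin 3) (L ⊗[K] A)) = !![1, u, w; 0, 1, tau K L σ A u; 0, 0, 1]}

/-- The `A`-points of the unipotent radical of the lower Borel of `SU₃`:
the transposes of elements of `Uplus`. -/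
def Uminus : Set (Matrix.SpecialLinearGroup (Fin 3) (L ⊗[K] A)) :=
  {M | ∃ u w : L ⊗[K] A, w + tau K L σ A w = u * tau K L σ A u ∧
    (M : Matrix (Fin 3) (Fin 3) (L ⊗[K] A)) =
      (!![1, u, w; 0, 1, tau K L σ A u; 0, 0, 1])ᵀ}

/-- The `A`-points of the standard maximal torus of `SU₃`. -/
def Torus : Set (Matrix.SpecialLinearGroup (Fin 3) (L ⊗[K] A)) :=
  {M | ∃ y : (L ⊗[K] A)ˣ,
    (M : Matrix (Fin 3) (Fin 3) (L ⊗[K] A)) =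
      !![(y : L ⊗[K] A), 0, 0;
         0, ((y⁻¹ : (L ⊗[K] A)ˣ) : L ⊗[K] A) * tau K L σ A y, 0;
         0, 0, tau K L σ A ((y⁻¹ : (L ⊗[K] A)ˣ) : L ⊗[K] A)]}


section Generic
variable {R : Type*} [CommRing R]

theorem lower_eq_transpose (p q r : R) :
    !![(1 : R), 0, 0; p, 1, 0; q, r, 1] = (!![(1 : R), p, q; 0, 1, r; 0, 0, 1])ᵀ := by
  ext i j
  fin_cases i <;> fin_cases j <;> rfl

theorem key_generic (u ub W Wi V Vi : R)
    (hc : W + V = u * ub) (hW : W * Wi = 1) (hV : V * Vi = 1) :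
    !![1, 0, 0; -(ub * Wi), 1, 0; Vi, -(u * Vi), 1] *
      !![1, u, W; 0, 1, ub; 0, 0, 1] *
      !![1, 0, 0; -(ub * Vi), 1, 0; Vi, -(u * Wi), 1] =
      !![0, 0, W; 0, -(V * Wi), 0; Vi, 0, 0] := by
  rw [Matrix.mul_fin_three, Matrix.mul_fin_three]
  ext i j
  fin_cases i <;> fin_cases j <;> simp [Matrix.vecHead, Matrix.vecTail]
  · linear_combination Vi * hc - hV
  · linear_combination -u * hW
  · linear_combination (-(ub * Wi) * Vi) * hc + (ub * Wi) * hV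
  · linear_combination (2 * Wi - Wi ^ 2 * W) * hc + (W * Wi - 1 + V * Wi) * hW
  · linear_combination -ub * hW
  · linear_combination Vi ^ 2 * hc - Vi * hV
  · linear_combination (-(u * Wi * Vi)) * hc + (u * Wi) * hV
  · linear_combination Vi * hc - hV

theorem kw_generic (W Wi V Vi W' W'i V' V'i : R)
    (hW' : W' * W'i = 1) (hV' : V' * V'i = 1) :
    !![W * W'i, 0, 0; 0, (W' * Wi) * (V * V'i), 0; 0, 0, V' * Vi] *
      !![0, 0, W'; 0, -(V' * W'i), 0; V'i, 0, 0] =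
      !![0, 0, W; 0, -(V * Wi), 0; Vi, 0, 0] := by
  rw [Matrix.mul_fin_three]
  ext i j
  fin_cases i <;> fin_cases j <;> simp [Matrix.vecHead, Matrix.vecTail]
  · linear_combination W * hW'
  · linear_combination (V * Wi * V' * V'i) * hW' + (V * Wi) * hV'
  · linear_combination Vi * hV'

theorem diag_mul_diag (a b c d e f : R) :
    !![a, 0, 0; 0, b, 0; 0, 0, c] * !![d, 0, 0; 0, e, 0; 0, 0, f] =
      !![a * d, 0, 0; 0, b * e, 0; 0, 0, c * f] := by
  rw [Matrix.mul_fin_three]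
  ext i j
  fin_cases i <;> fin_cases j <;> simp

end Generic

variable {K L A σ}

theorem tau_tmul (l : L) (a : A) : tau K L σ A (l ⊗ₜ a) = σ l ⊗ₜ a := rfl

theorem exists_e (hσ : σ ≠ AlgEquiv.refl) (hinv : ∀ x : L, σ (σ x) = x) :
    ∃ e : L, σ e ≠ e ∧ e + σ e = 1 := by
  have hz : ∃ z : L, σ z ≠ z := by
    by_contra h
    push_neg at h
    exact hσ (AlgEquiv.ext fun x => (h x).trans rfl)
  obtain ⟨z, hz⟩ := hz
  have hz0 : z ≠ 0 := by rintro rfl; simp at hz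
  have hσ2 : σ (2⁻¹ : L) = 2⁻¹ := by
    rw [map_inv₀, map_ofNat]
  by_cases ht : z + σ z = 0
  · have h2 : (2 : L) ≠ 0 := by
      intro h2
      apply hz
      have h3 : σ z = -z := by linear_combination ht
      rw [h3]
      linear_combination (-z) * h2
    refine ⟨2⁻¹ * (z + 1), ?_, ?_⟩
    · rw [_root_.map_mul, map_add, _root_.map_one, hσ2]
      intro h
      apply hz
      have h' := mul_left_cancel₀ (inv_ne_zero h2) h
      have h3 : σ z = -z := by linear_combination ht
      rw [h3] at h'
      have h4 : (2 : L) * z = 0 := by linear_combination -h'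
      rcases mul_eq_zero.1 h4 with h | h
      · exact absurd h h2
      · exact absurd h hz0
    · rw [_root_.map_mul, map_add, _root_.map_one, hσ2]
      have h5 : (2 : L) * 2⁻¹ = 1 := mul_inv_cancel₀ h2
      linear_combination 2⁻¹ * ht + h5
  · have hσt : σ (z + σ z) = z + σ z := by
      rw [map_add, hinv, add_comm]
    refine ⟨(z + σ z)⁻¹ * z, ?_, ?_⟩
    · rw [_root_.map_mul, map_inv₀, hσt]
      intro h
      exact hz (mul_left_cancel₀ (inv_ne_zero ht) h)
    · rw [_root_.map_mul, map_inv₀, hσt, ← mul_add]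
      exact inv_mul_cancel₀ ht

theorem sigma_sigma [IsGalois K L] [FiniteDimensional K L]
    (hdeg : Module.finrank K L = 2) (hσ : σ ≠ AlgEquiv.refl) (x : L) : σ (σ x) = x := by
  have hcard : Fintype.card (L ≃ₐ[K] L) = 2 := by
    rw [← Nat.card_eq_fintype_card, IsGalois.card_aut_eq_finrank]; exact hdeg
  have h1 : orderOf σ ∣ 2 := hcard ▸ orderOf_dvd_card
  have h2 : orderOf σ = 2 := by
    rcases (Nat.dvd_prime Nat.prime_two).1 h1 with h | h
    · exact absurd (orderOf_eq_one_iff.1 h) hσ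
    · exact h
  have h3 : σ ^ 2 = 1 := h2 ▸ pow_orderOf_eq_one σ
  have := congrArg (fun (e : L ≃ₐ[K] L) => e x) h3
  simpa [pow_two, AlgEquiv.mul_apply] using this

theorem tau_tau [IsGalois K L] [FiniteDimensional K L]
    (hdeg : Module.finrank K L = 2) (hσ : σ ≠ AlgEquiv.refl) (x : L ⊗[K] A) :
    tau K L σ A (tau K L σ A x) = x := by
  induction x using TensorProduct.induction_on with
  | zero => simp
  | tmul l a => simp [tau_tmul, sigma_sigma hdeg hσ]
  | add x y hx hy => simp [map_add, hx, hy]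

theorem tau_fixed_and_nontriv [Nontrivial A] (hdeg : Module.finrank K L = 2)
    (e : L) (he : σ e ≠ e) (hetr : e + σ e = 1) :
    (1 : L ⊗[K] A) ≠ 0 ∧
      ∀ x : L ⊗[K] A, tau K L σ A x = x → ∃ a : A, x = (1 : L) ⊗ₜ a := by
  have hfin : FiniteDimensional K L := by
    have : 0 < Module.finrank K L := by omega
    exact Module.finite_of_finrank_pos this
  have hli : LinearIndependent K ![(1 : L), e] := by
    refine (LinearIndependent.pair_iff' one_ne_zero).2 fun a h => ?_
    apply he
    rw [← h]
    have h2 : a • (1 : L) = algebraMap K L a := (Algebra.algebraMap_eq_smul_one a).symm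
    rw [h2, AlgEquiv.commutes]
  have hsp : Submodule.span K (Set.range ![(1 : L), e]) = ⊤ :=
    hli.span_eq_top_of_card_eq_finrank (by simp [hdeg])
  let b : Module.Basis (Fin 2) K L := Module.Basis.mk hli hsp.ge
  set ψ : L ⊗[K] A →ₗ[K] A :=
    (TensorProduct.lid K A).toLinearMap ∘ₗ LinearMap.rTensor A (b.coord 0) with hψdef
  have hψ : ∀ (l : L) (a : A), ψ (l ⊗ₜ a) = b.coord 0 l • a := by
    intro l a
    simp [hψdef, LinearMap.rTensor_tmul, TensorProduct.lid_tmul]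
  have hb0 : b.coord 0 (1 : L) = 1 := by
    have : (1 : L) = b 0 := by simp [b, Module.Basis.mk_apply]
    rw [this, Module.Basis.coord_apply, Module.Basis.repr_self]
    simp
  have hb1 : b.coord 0 e = 0 := by
    have : e = b 1 := by simp [b, Module.Basis.mk_apply]
    rw [this, Module.Basis.coord_apply, Module.Basis.repr_self]
    simp [Finsupp.single_apply]
  have hdec : ∀ x : L ⊗[K] A, ∃ a c : A, x = (1 : L) ⊗ₜ a + e ⊗ₜ c := by
    intro x
    induction x using TensorProduct.induction_on with
    | zero => exact ⟨0, 0, by simp⟩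
    | tmul l a =>
      refine ⟨b.repr l 0 • a, b.repr l 1 • a, ?_⟩
      have hl : l = b.repr l 0 • (1 : L) + b.repr l 1 • e := by
        have := b.sum_repr l
        rw [Fin.sum_univ_two] at this
        simp only [b, Module.Basis.mk_apply] at this
        simpa [b, Matrix.cons_val_zero, Matrix.cons_val_one] using this.symm
      rw [← TensorProduct.smul_tmul, ← TensorProduct.smul_tmul]
      rw [← TensorProduct.add_tmul, ← hl]
    | add x y hx hy =>
      obtain ⟨a1, c1, h1⟩ := hx
      obtain ⟨a2, c2, h2⟩ := hy
      refine ⟨a1 + a2, c1 + c2, ?_⟩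
      rw [h1, h2, TensorProduct.tmul_add, TensorProduct.tmul_add]
      ring
  constructor
  · intro h10
    have : ψ 1 = 1 := by
      rw [Algebra.TensorProduct.one_def, hψ, hb0, one_smul]
    rw [h10, map_zero] at this
    exact one_ne_zero this.symm
  · intro x hx
    obtain ⟨a, c, hxe⟩ := hdec x
    have hσe : σ e = 1 - e := by linear_combination hetr
    have htx : tau K L σ A x = (1 : L) ⊗ₜ a + (1 - e) ⊗ₜ c := by
      rw [hxe, map_add, tau_tmul, tau_tmul, _root_.map_one, hσe]
    have hψ1 : ψ x = a := by rw [hxe, map_add, hψ, hψ, hb0, hb1, one_smul, zero_smul, add_zero]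
    have hψ2 : ψ (tau K L σ A x) = a + c := by
      rw [htx, map_add, hψ, hψ, hb0, one_smul]
      have : b.coord 0 (1 - e) = 1 := by rw [map_sub, hb0, hb1, sub_zero]
      rw [this, one_smul]
    rw [hx, hψ1] at hψ2
    have hc : c = 0 := by linear_combination -hψ2
    exact ⟨a, by rw [hxe, hc, TensorProduct.tmul_zero, add_zero]⟩


variable (K L A σ)

/-- The torus element attached to a unit. -/
def TT (y : (L ⊗[K] A)ˣ) : Matrix.SpecialLinearGroup (Fin 3) (L ⊗[K] A) :=
  ⟨!![(y : L ⊗[K] A), 0, 0;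
      0, ((y⁻¹ : (L ⊗[K] A)ˣ) : L ⊗[K] A) * tau K L σ A y, 0;
      0, 0, tau K L σ A ((y⁻¹ : (L ⊗[K] A)ˣ) : L ⊗[K] A)], by
    have hW : (y : L ⊗[K] A) * ((y⁻¹ : (L ⊗[K] A)ˣ) : L ⊗[K] A) = 1 := y.mul_inv
    have hV : tau K L σ A (y : L ⊗[K] A) * tau K L σ A ((y⁻¹ : (L ⊗[K] A)ˣ) : L ⊗[K] A) = 1 := by
      rw [← _root_.map_mul, hW, _root_.map_one]
    simp [Matrix.det_fin_three]
    linear_combination hV⟩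

/-- The antidiagonal "Weyl" element attached to a unit. -/
def MM (w : (L ⊗[K] A)ˣ) : Matrix.SpecialLinearGroup (Fin 3) (L ⊗[K] A) :=
  ⟨!![0, 0, (w : L ⊗[K] A);
      0, -(tau K L σ A (w : L ⊗[K] A) * ((w⁻¹ : (L ⊗[K] A)ˣ) : L ⊗[K] A)), 0;
      tau K L σ A ((w⁻¹ : (L ⊗[K] A)ˣ) : L ⊗[K] A), 0, 0], by
    have hW : (w : L ⊗[K] A) * ((w⁻¹ : (L ⊗[K] A)ˣ) : L ⊗[K] A) = 1 := w.mul_inv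
    have hV : tau K L σ A (w : L ⊗[K] A) * tau K L σ A ((w⁻¹ : (L ⊗[K] A)ˣ) : L ⊗[K] A) = 1 := by
      rw [← _root_.map_mul, hW, _root_.map_one]
    simp [Matrix.det_fin_three]
    linear_combination (tau K L σ A (w : L ⊗[K] A) * tau K L σ A ((w⁻¹ : (L ⊗[K] A)ˣ) : L ⊗[K] A)) * hW + hV⟩

variable {K L A σ}



theorem MM_mem (hττ : ∀ x, tau K L σ A (tau K L σ A x) = x)
    (w : (L ⊗[K] A)ˣ) (u : L ⊗[K] A)
    (hc : (w : L ⊗[K] A) + tau K L σ A (w : L ⊗[K] A) = u * tau K L σ A u) :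
    MM K L σ A w ∈ Subgroup.closure (Uplus K L σ A ∪ Uminus K L σ A) := by
  set t : L ⊗[K] A →ₐ[K] L ⊗[K] A := tau K L σ A with hts
  set W : L ⊗[K] A := (w : L ⊗[K] A) with hWs
  set Wi : L ⊗[K] A := ((w⁻¹ : (L ⊗[K] A)ˣ) : L ⊗[K] A) with hWis
  have hW : W * Wi = 1 := w.mul_inv
  have hV : t W * t Wi = 1 := by rw [← _root_.map_mul, hW, _root_.map_one]
  have hd1 : Matrix.det !![(1 : L ⊗[K] A), 0, 0; -(t u * Wi), 1, 0; t Wi, -(u * t Wi), 1] = 1 := by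
    simp [Matrix.det_fin_three, Matrix.vecHead, Matrix.vecTail]
  have hd2 : Matrix.det !![(1 : L ⊗[K] A), u, W; 0, 1, t u; 0, 0, 1] = 1 := by
    simp [Matrix.det_fin_three, Matrix.vecHead, Matrix.vecTail]
  have hd3 : Matrix.det !![(1 : L ⊗[K] A), 0, 0; -(t u * t Wi), 1, 0; t Wi, -(u * Wi), 1] = 1 := by
    simp [Matrix.det_fin_three, Matrix.vecHead, Matrix.vecTail]
  set X1 : Matrix.SpecialLinearGroup (Fin 3) (L ⊗[K] A) := ⟨_, hd1⟩ with hX1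
  set X2 : Matrix.SpecialLinearGroup (Fin 3) (L ⊗[K] A) := ⟨_, hd2⟩ with hX2
  set X3 : Matrix.SpecialLinearGroup (Fin 3) (L ⊗[K] A) := ⟨_, hd3⟩ with hX3
  have hm1 : X1 ∈ Subgroup.closure (Uplus K L σ A ∪ Uminus K L σ A) := by
    apply Subgroup.subset_closure
    right
    refine ⟨-(t u * Wi), t Wi, ?_, ?_⟩
    · have h1 : t (t Wi) = Wi := hττ Wi
      have h2 : t (-(t u * Wi)) = -(u * t Wi) := by
        rw [map_neg, _root_.map_mul, hττ]
      rw [h1, h2]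
      linear_combination (Wi * t Wi) * hc - t Wi * hW - Wi * hV
    · have h2 : t (-(t u * Wi)) = -(u * t Wi) := by
        rw [map_neg, _root_.map_mul, hττ]
      rw [h2]
      exact lower_eq_transpose (-(t u * Wi)) (t Wi) (-(u * t Wi))
  have hm2 : X2 ∈ Subgroup.closure (Uplus K L σ A ∪ Uminus K L σ A) := by
    apply Subgroup.subset_closure
    left
    exact ⟨u, W, hc, rfl⟩
  have hm3 : X3 ∈ Subgroup.closure (Uplus K L σ A ∪ Uminus K L σ A) := by
    apply Subgroup.subset_closure
    right
    refine ⟨-(t u * t Wi), t Wi, ?_, ?_⟩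
    · have h1 : t (t Wi) = Wi := hττ Wi
      have h2 : t (-(t u * t Wi)) = -(u * Wi) := by
        rw [map_neg, _root_.map_mul, hττ, hττ]
      rw [h1, h2]
      linear_combination (Wi * t Wi) * hc - t Wi * hW - Wi * hV
    · have h2 : t (-(t u * t Wi)) = -(u * Wi) := by
        rw [map_neg, _root_.map_mul, hττ, hττ]
      rw [h2]
      exact lower_eq_transpose (-(t u * t Wi)) (t Wi) (-(u * Wi))
  have key2 : X1 * X2 * X3 = MM K L σ A w := by
    exact Subtype.ext (key_generic u (t u) W Wi (t W) (t Wi) hc hW hV)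
  rw [← key2]
  exact mul_mem (mul_mem hm1 hm2) hm3

theorem TT_mul (y z : (L ⊗[K] A)ˣ) :
    TT K L σ A (y * z) = TT K L σ A y * TT K L σ A z := by
  set t : L ⊗[K] A →ₐ[K] L ⊗[K] A := tau K L σ A with hts
  have E2 : (((y * z)⁻¹ : (L ⊗[K] A)ˣ) : L ⊗[K] A) * t ((y * z : (L ⊗[K] A)ˣ) : L ⊗[K] A) =
      (((y⁻¹ : (L ⊗[K] A)ˣ) : L ⊗[K] A) * t (y : L ⊗[K] A)) *
        (((z⁻¹ : (L ⊗[K] A)ˣ) : L ⊗[K] A) * t (z : L ⊗[K] A)) := by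
    rw [_root_.mul_inv_rev, Units.val_mul, Units.val_mul, _root_.map_mul]
    ring
  have E3 : t (((y * z)⁻¹ : (L ⊗[K] A)ˣ) : L ⊗[K] A) =
      t (((y⁻¹ : (L ⊗[K] A)ˣ) : L ⊗[K] A)) * t (((z⁻¹ : (L ⊗[K] A)ˣ) : L ⊗[K] A)) := by
    rw [_root_.mul_inv_rev, Units.val_mul, _root_.map_mul]
    ring
  apply Subtype.ext
  show !![((y * z : (L ⊗[K] A)ˣ) : L ⊗[K] A), 0, 0;
      0, (((y * z)⁻¹ : (L ⊗[K] A)ˣ) : L ⊗[K] A) * t ((y * z : (L ⊗[K] A)ˣ) : L ⊗[K] A), 0;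
      0, 0, t (((y * z)⁻¹ : (L ⊗[K] A)ˣ) : L ⊗[K] A)] = _
  rw [E2, E3, Units.val_mul]
  exact (diag_mul_diag _ _ _ _ _ _).symm

theorem TT_mem (hττ : ∀ x, tau K L σ A (tau K L σ A x) = x)
    (w w' : (L ⊗[K] A)ˣ) (u u' : L ⊗[K] A)
    (hc : (w : L ⊗[K] A) + tau K L σ A (w : L ⊗[K] A) = u * tau K L σ A u)
    (hc' : (w' : L ⊗[K] A) + tau K L σ A (w' : L ⊗[K] A) = u' * tau K L σ A u') :
    TT K L σ A (w * w'⁻¹) ∈ Subgroup.closure (Uplus K L σ A ∪ Uminus K L σ A) := by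
  set t : L ⊗[K] A →ₐ[K] L ⊗[K] A := tau K L σ A with hts
  have h1 := MM_mem hττ w u hc
  have h2 := MM_mem hττ w' u' hc'
  have hW' : (w' : L ⊗[K] A) * ((w'⁻¹ : (L ⊗[K] A)ˣ) : L ⊗[K] A) = 1 := w'.mul_inv
  have hV' : t (w' : L ⊗[K] A) * t ((w'⁻¹ : (L ⊗[K] A)ˣ) : L ⊗[K] A) = 1 := by
    rw [← _root_.map_mul, hW', _root_.map_one]
  have key : TT K L σ A (w * w'⁻¹) * MM K L σ A w' = MM K L σ A w := by
    apply Subtype.ext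
    have E1 : ((w * w'⁻¹ : (L ⊗[K] A)ˣ) : L ⊗[K] A) =
        (w : L ⊗[K] A) * ((w'⁻¹ : (L ⊗[K] A)ˣ) : L ⊗[K] A) := rfl
    have E2 : (((w * w'⁻¹)⁻¹ : (L ⊗[K] A)ˣ) : L ⊗[K] A) *
          t ((w * w'⁻¹ : (L ⊗[K] A)ˣ) : L ⊗[K] A) =
        ((w' : L ⊗[K] A) * ((w⁻¹ : (L ⊗[K] A)ˣ) : L ⊗[K] A)) *
          (t (w : L ⊗[K] A) * t ((w'⁻¹ : (L ⊗[K] A)ˣ) : L ⊗[K] A)) := by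
      rw [_root_.mul_inv_rev, inv_inv, Units.val_mul, Units.val_mul, _root_.map_mul]
    have E3 : t (((w * w'⁻¹)⁻¹ : (L ⊗[K] A)ˣ) : L ⊗[K] A) =
        t (w' : L ⊗[K] A) * t ((w⁻¹ : (L ⊗[K] A)ˣ) : L ⊗[K] A) := by
      rw [_root_.mul_inv_rev, inv_inv, Units.val_mul, _root_.map_mul]
    show !![((w * w'⁻¹ : (L ⊗[K] A)ˣ) : L ⊗[K] A), 0, 0;
        0, (((w * w'⁻¹)⁻¹ : (L ⊗[K] A)ˣ) : L ⊗[K] A) *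
          t ((w * w'⁻¹ : (L ⊗[K] A)ˣ) : L ⊗[K] A), 0;
        0, 0, t (((w * w'⁻¹)⁻¹ : (L ⊗[K] A)ˣ) : L ⊗[K] A)] *
        !![0, 0, (w' : L ⊗[K] A);
          0, -(t (w' : L ⊗[K] A) * ((w'⁻¹ : (L ⊗[K] A)ˣ) : L ⊗[K] A)), 0;
          t ((w'⁻¹ : (L ⊗[K] A)ˣ) : L ⊗[K] A), 0, 0] = _
    rw [E2, E3, E1]
    exact kw_generic (w : L ⊗[K] A) _ (t (w : L ⊗[K] A)) _ _ _ _ _ hW' hV'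
  have key2 : TT K L σ A (w * w'⁻¹) = MM K L σ A w * (MM K L σ A w')⁻¹ :=
    eq_mul_inv_of_mul_eq key
  rw [key2]
  exact mul_mem h1 (inv_mem h2)

set_option maxHeartbeats 1000000 in
/-- Kneser–Tits-type generation statement for `SU₃` over Artinian local coefficient
rings: if `A` is an Artinian local commutative `K`-algebra, then every element of
`T(A)` lies in the subgroup of `SL₃(L ⊗[K] A)` generated by `U⁺(A)` and `U⁻(A)`. -/
theorem artinian_kneserTits_SU3 [IsGalois K L]
    (hdeg : Module.finrank K L = 2) (hσ : σ ≠ AlgEquiv.refl)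
    [IsArtinianRing A] [IsLocalRing A] :
    ∀ M ∈ Torus K L σ A,
      M ∈ Subgroup.closure (Uplus K L σ A ∪ Uminus K L σ A) := by
  have hfin : FiniteDimensional K L := by
    have : 0 < Module.finrank K L := by omega
    exact Module.finite_of_finrank_pos this
  have hinv : ∀ x : L, σ (σ x) = x := sigma_sigma hdeg hσ
  have hττ : ∀ x : L ⊗[K] A, tau K L σ A (tau K L σ A x) = tau K L σ A (tau K L σ A x) := fun _ => rfl
  clear hττ
  have hττ : ∀ x : L ⊗[K] A, tau K L σ A (tau K L σ A x) = x := tau_tau hdeg hσ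
  obtain ⟨e, he, hetr⟩ := exists_e hσ hinv
  obtain ⟨h10, hfix⟩ := tau_fixed_and_nontriv (A := A) hdeg e he hetr
  set t : L ⊗[K] A →ₐ[K] L ⊗[K] A := tau K L σ A with hts
  set H : Subgroup (Matrix.SpecialLinearGroup (Fin 3) (L ⊗[K] A)) :=
    Subgroup.closure (Uplus K L σ A ∪ Uminus K L σ A) with hH
  -- basic units
  have he0 : e ≠ 0 := by
    intro h
    apply he
    rw [h, map_zero]
  have hz0 : e - σ e ≠ 0 := sub_ne_zero.2 (Ne.symm he)
  have honeB : (1 : L ⊗[K] A) = (1 : L) ⊗ₜ (1 : A) := Algebra.TensorProduct.one_def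
  set EU : (L ⊗[K] A)ˣ :=
    ⟨e ⊗ₜ 1, e⁻¹ ⊗ₜ 1,
      by rw [Algebra.TensorProduct.tmul_mul_tmul, mul_inv_cancel₀ he0, mul_one, ← honeB],
      by rw [Algebra.TensorProduct.tmul_mul_tmul, inv_mul_cancel₀ he0, mul_one, ← honeB]⟩
    with hEU
  set ZU : (L ⊗[K] A)ˣ :=
    ⟨(e - σ e) ⊗ₜ 1, (e - σ e)⁻¹ ⊗ₜ 1,
      by rw [Algebra.TensorProduct.tmul_mul_tmul, mul_inv_cancel₀ hz0, mul_one, ← honeB],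
      by rw [Algebra.TensorProduct.tmul_mul_tmul, inv_mul_cancel₀ hz0, mul_one, ← honeB]⟩
    with hZU
  have htZ : t (ZU : L ⊗[K] A) = -(ZU : L ⊗[K] A) := by
    show t ((e - σ e) ⊗ₜ 1) = -((e - σ e) ⊗ₜ 1)
    rw [tau_tmul]
    have : σ (e - σ e) = -(e - σ e) := by
      rw [map_sub, hinv]
      ring
    rw [this, TensorProduct.neg_tmul]
  -- Step A: fixed units are in H
  have stepA : ∀ c : (L ⊗[K] A)ˣ, t (c : L ⊗[K] A) = (c : L ⊗[K] A) → TT K L σ A c ∈ H := by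
    intro c hcf
    have hcond1 : ((c * ZU : (L ⊗[K] A)ˣ) : L ⊗[K] A) + t ((c * ZU : (L ⊗[K] A)ˣ) : L ⊗[K] A) =
        (0 : L ⊗[K] A) * t 0 := by
      rw [Units.val_mul, _root_.map_mul, hcf, htZ, map_zero, mul_zero]
      ring
    have hcond2 : ((ZU : (L ⊗[K] A)ˣ) : L ⊗[K] A) + t (ZU : L ⊗[K] A) = (0 : L ⊗[K] A) * t 0 := by
      rw [htZ, map_zero, mul_zero]
      ring
    have hmem := TT_mem hττ (c * ZU) ZU 0 0 hcond1 hcond2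
    rwa [mul_inv_cancel_right] at hmem
  -- a special fixed unit with trace a norm
  have hPa : ∃ a : (L ⊗[K] A)ˣ, t (a : L ⊗[K] A) = (a : L ⊗[K] A) ∧
      ∃ ua : L ⊗[K] A, (a : L ⊗[K] A) + t (a : L ⊗[K] A) = ua * t ua := by
    by_cases h2 : (2 : K) = 0
    · refine ⟨1, by rw [Units.val_one, _root_.map_one], 0, ?_⟩
      rw [Units.val_one, _root_.map_one, map_zero, mul_zero]
      have : ((2 : K) • (1 : L ⊗[K] A)) = (1 : L ⊗[K] A) + 1 := by
        rw [two_smul]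
      rw [← this, h2, zero_smul]
    · refine ⟨⟨algebraMap K (L ⊗[K] A) 2⁻¹, algebraMap K (L ⊗[K] A) 2, ?_, ?_⟩, ?_, 1, ?_⟩
      · rw [← _root_.map_mul, inv_mul_cancel₀ h2, _root_.map_one]
      · rw [← _root_.map_mul, mul_inv_cancel₀ h2, _root_.map_one]
      · exact AlgHom.commutes t 2⁻¹
      · show algebraMap K (L ⊗[K] A) 2⁻¹ + t (algebraMap K (L ⊗[K] A) 2⁻¹) = 1 * t 1
        rw [AlgHom.commutes, _root_.map_one, mul_one, ← map_add]
        rw [show (2⁻¹ + 2⁻¹ : K) = 1 by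
          have h22 : (2 : K) * 2⁻¹ = 1 := mul_inv_cancel₀ h2
          linear_combination h22]
        rw [_root_.map_one]
  -- Step B: P-units are in H
  have stepB : ∀ x : (L ⊗[K] A)ˣ,
      (∃ u : L ⊗[K] A, (x : L ⊗[K] A) + t (x : L ⊗[K] A) = u * t u) → TT K L σ A x ∈ H := by
    rintro x ⟨u, hu⟩
    obtain ⟨a, hafix, ua, hua⟩ := hPa
    have h1 : TT K L σ A (x * a⁻¹) ∈ H := TT_mem hττ x a u ua hu hua
    have h2 : TT K L σ A a ∈ H := stepA a hafix
    have hx : TT K L σ A x = TT K L σ A (x * a⁻¹) * TT K L σ A a := by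
      rw [← TT_mul, inv_mul_cancel_right]
    rw [hx]
    exact mul_mem h1 h2
  -- Step C: units with unit trace are in H
  have stepC : ∀ y : (L ⊗[K] A)ˣ,
      IsUnit ((y : L ⊗[K] A) + t (y : L ⊗[K] A)) → TT K L σ A y ∈ H := by
    intro y hcu
    set c : (L ⊗[K] A)ˣ := hcu.unit with hcdef
    have hcv : (c : L ⊗[K] A) = (y : L ⊗[K] A) + t (y : L ⊗[K] A) := hcu.unit_spec
    have hcfix : t (c : L ⊗[K] A) = (c : L ⊗[K] A) := by
      rw [hcv, map_add, hττ, add_comm]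
    have h1 : TT K L σ A c ∈ H := stepA c hcfix
    have hccinv : ((c⁻¹ : (L ⊗[K] A)ˣ) : L ⊗[K] A) * (c : L ⊗[K] A) = 1 := c.inv_mul
    have hcc : (c : L ⊗[K] A) * ((c⁻¹ : (L ⊗[K] A)ˣ) : L ⊗[K] A) = 1 := c.mul_inv
    have hinvfix : t ((c⁻¹ : (L ⊗[K] A)ˣ) : L ⊗[K] A) = ((c⁻¹ : (L ⊗[K] A)ˣ) : L ⊗[K] A) := by
      have hr1 : t ((c⁻¹ : (L ⊗[K] A)ˣ) : L ⊗[K] A) * (c : L ⊗[K] A) = 1 := by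
        rw [← hcfix, ← _root_.map_mul, hccinv, _root_.map_one]
      linear_combination ((c⁻¹ : (L ⊗[K] A)ˣ) : L ⊗[K] A) * hr1 -
        t ((c⁻¹ : (L ⊗[K] A)ˣ) : L ⊗[K] A) * hcc
    have hcond : ((c⁻¹ * y : (L ⊗[K] A)ˣ) : L ⊗[K] A) +
        t ((c⁻¹ * y : (L ⊗[K] A)ˣ) : L ⊗[K] A) = (1 : L ⊗[K] A) * t 1 := by
      rw [Units.val_mul, _root_.map_mul, hinvfix, _root_.map_one, mul_one]
      linear_combination hccinv - ((c⁻¹ : (L ⊗[K] A)ˣ) : L ⊗[K] A) * hcv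
    have h2 : TT K L σ A (c⁻¹ * y) ∈ H := stepB _ ⟨1, hcond⟩
    have hy : TT K L σ A y = TT K L σ A c * TT K L σ A (c⁻¹ * y) := by
      rw [← TT_mul, mul_inv_cancel_left]
    rw [hy]
    exact mul_mem h1 h2
  -- nilpotency of nonunits of A pushed into the tensor product
  have hnil : ∀ a : A, ¬IsUnit a → IsNilpotent ((1 : L) ⊗ₜ a : L ⊗[K] A) := by
    intro a ha
    have hmem : a ∈ IsLocalRing.maximalIdeal A := (IsLocalRing.mem_maximalIdeal a).2 ha
    obtain ⟨n, hn⟩ := IsArtinianRing.isNilpotent_jacobson_bot (R := A)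
    rw [IsLocalRing.jacobson_eq_maximalIdeal (⊥ : Ideal A) bot_ne_top] at hn
    have han : a ^ n = 0 := by
      have := Ideal.pow_mem_pow hmem n
      rw [hn] at this
      simpa using this
    exact ⟨n, by rw [Algebra.TensorProduct.tmul_pow, han, TensorProduct.tmul_zero]⟩
  -- dichotomy
  have dich : ∀ y : (L ⊗[K] A)ˣ,
      IsUnit ((y : L ⊗[K] A) + t (y : L ⊗[K] A)) ∨
      IsUnit ((EU : L ⊗[K] A) * (y : L ⊗[K] A) + t ((EU : L ⊗[K] A) * (y : L ⊗[K] A))) := by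
    intro y
    by_contra hcon
    push_neg at hcon
    obtain ⟨hn1, hn2⟩ := hcon
    set c1 : L ⊗[K] A := (y : L ⊗[K] A) + t (y : L ⊗[K] A) with hc1
    set c2 : L ⊗[K] A := (EU : L ⊗[K] A) * (y : L ⊗[K] A) +
      t ((EU : L ⊗[K] A) * (y : L ⊗[K] A)) with hc2
    have hc1f : t c1 = c1 := by rw [hc1, map_add, hττ, add_comm]
    have hc2f : t c2 = c2 := by rw [hc2, map_add, hττ, add_comm]
    obtain ⟨a1, ha1⟩ := hfix c1 hc1f
    obtain ⟨a2, ha2⟩ := hfix c2 hc2f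
    have hnu1 : ¬IsUnit a1 := by
      intro h
      apply hn1
      have := h.map (Algebra.TensorProduct.includeRight : A →ₐ[K] L ⊗[K] A)
      rwa [show (Algebra.TensorProduct.includeRight : A →ₐ[K] L ⊗[K] A) a1 = (1 : L) ⊗ₜ a1
        from rfl, ← ha1] at this
    have hnu2 : ¬IsUnit a2 := by
      intro h
      apply hn2
      have := h.map (Algebra.TensorProduct.includeRight : A →ₐ[K] L ⊗[K] A)
      rwa [show (Algebra.TensorProduct.includeRight : A →ₐ[K] L ⊗[K] A) a2 = (1 : L) ⊗ₜ a2
        from rfl, ← ha2] at this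
    have hN1 : IsNilpotent ((1 : L) ⊗ₜ a1 : L ⊗[K] A) := hnil a1 hnu1
    have hN2 : IsNilpotent ((1 : L) ⊗ₜ a2 : L ⊗[K] A) := hnil a2 hnu2
    -- main relation : ZU * t y = EU * c1 - c2
    have hZE : (ZU : L ⊗[K] A) = (EU : L ⊗[K] A) - t (EU : L ⊗[K] A) := by
      show (e - σ e) ⊗ₜ (1 : A) = e ⊗ₜ 1 - t (e ⊗ₜ 1)
      rw [tau_tmul, TensorProduct.sub_tmul]
    have hmain : (ZU : L ⊗[K] A) * t (y : L ⊗[K] A) =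
        (EU : L ⊗[K] A) * c1 - c2 := by
      rw [hZE, hc1, hc2, _root_.map_mul]
      ring
    have hty : t (y : L ⊗[K] A) = ((ZU⁻¹ : (L ⊗[K] A)ˣ) : L ⊗[K] A) *
        ((EU : L ⊗[K] A) * ((1 : L) ⊗ₜ a1) - (1 : L) ⊗ₜ a2) := by
      rw [← ha1, ← ha2, ← hmain, ← mul_assoc, ZU.inv_mul, one_mul]
    have hNty : IsNilpotent (t (y : L ⊗[K] A)) := by
      rw [hty]
      apply Commute.isNilpotent_mul_left (Commute.all _ _)
      exact Commute.isNilpotent_sub (Commute.all _ _)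
        (Commute.isNilpotent_mul_left (Commute.all _ _) hN1) hN2
    have hUty : IsUnit (t (y : L ⊗[K] A)) := y.isUnit.map t
    obtain ⟨k, hk⟩ := hNty
    have := hUty.pow k
    rw [hk] at this
    rcases isUnit_zero_iff.1 this with h01
    exact h10 h01.symm
  -- final assembly
  intro M hM
  obtain ⟨y, hy⟩ := hM
  have hMT : M = TT K L σ A y := Subtype.ext hy
  rw [hMT]
  rcases dich y with h | h
  · exact stepC y h
  · have h1 : TT K L σ A (EU * y) ∈ H := by
      apply stepC
      rwa [Units.val_mul]
    have hcondE : ((EU : (L ⊗[K] A)ˣ) : L ⊗[K] A) + t (EU : L ⊗[K] A) =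
        (1 : L ⊗[K] A) * t 1 := by
      show e ⊗ₜ (1 : A) + t (e ⊗ₜ 1) = (1 : L ⊗[K] A) * t 1
      rw [tau_tmul, _root_.map_one, mul_one, ← TensorProduct.add_tmul, hetr, ← honeB]
    have h2 : TT K L σ A EU ∈ H := stepB EU ⟨1, hcondE⟩
    have hy2 : TT K L σ A y = (TT K L σ A EU)⁻¹ * TT K L σ A (EU * y) := by
      rw [TT_mul, inv_mul_cancel_left]
    rw [hy2]
    exact mul_mem (inv_mem h2) h1
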